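/- arXiv:2601.09167 — 8 statements merged into one kernel-verified Lean document; each statement's English description precedes it below -/
import Mathlib

section
/- Let X be a finite set with |X| = 3q and let C = {C_1, …, C_t} be a collection of 3-element subsets of X. Let X' = X ∪ {d_1, …, d_q}, where d_1, …, d_q are q distinct new elements not in X, and let C' = {C_i ∪ {d_j} : i ∈ [t], j ∈ [q]} (each a 4-element subset of X'). Then X has an exact 3-cover from C if and only if X' has an exact 4-cover from C'. -/
/-- An exact cover of a finite set `X` from a collection `C` of subsets of `X` is a
subcollection of pairwise disjoint sets from `C` whose union is `X`. -/
def HasExactCover {α : Type*} [DecidableEq α] (X : Finset α) (C : Finset (Finset α)) : Prop :=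
  ∃ C' ⊆ C, (C' : Set (Finset α)).Pairwise (fun s s' => Disjoint s s') ∧ C'.biUnion id = X

/-- `X` (with `|X| = 3q`) has an exact 3-cover from `C` iff
`X' = X ∪ D` has an exact 4-cover from `C' = {Cᵢ ∪ {dⱼ}}`, where `D` is a set of `q`
new elements disjoint from `X`. -/
theorem exact3Cover_iff_exact4Cover {α : Type*} [DecidableEq α] (q : ℕ)
    (X : Finset α) (C : Finset (Finset α)) (D : Finset α)
    (hX : X.card = 3 * q)
    (hC : ∀ c ∈ C, c.card = 3 ∧ c ⊆ X)
    (hD : D.card = q) (hXD : Disjoint X D) :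
    HasExactCover X C ↔
      HasExactCover (X ∪ D) ((C ×ˢ D).image fun cd => insert cd.2 cd.1) := by
  constructor
  · rintro ⟨B, hBC, hBdisj, hBunion⟩
    have hcard : B.card = q := by
      have h1 : (B.biUnion id).card = ∑ s ∈ B, (id s).card :=
        Finset.card_biUnion (fun s hs t ht hst => hBdisj hs ht hst)
      have h2 : ∑ s ∈ B, (id s).card = 3 * B.card := by
        simp only [id]
        rw [Finset.sum_congr rfl (fun s hs => (hC s (hBC hs)).1), Finset.sum_const,
          smul_eq_mul, mul_comm]
      rw [hBunion, hX] at h1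
      omega
    have e : {x // x ∈ B} ≃ {x // x ∈ D} := Finset.equivOfCardEq (by rw [hcard, hD])
    refine ⟨B.attach.image (fun c => insert ((e c : α)) c.1), ?_, ?_, ?_⟩
    · intro s hs
      simp only [Finset.mem_image, Finset.mem_attach, true_and] at hs
      obtain ⟨c, rfl⟩ := hs
      refine Finset.mem_image.mpr ⟨(c.1, (e c : α)), ?_, rfl⟩
      exact Finset.mem_product.mpr ⟨hBC c.2, (e c).2⟩
    · intro s hs t ht hst
      simp only [Finset.coe_image, Set.mem_image, Finset.mem_coe, Finset.mem_attach,
        true_and] at hs ht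
      obtain ⟨a, rfl⟩ := hs
      obtain ⟨b, rfl⟩ := ht
      have hab : a ≠ b := by rintro rfl; exact hst rfl
      have hvals : a.1 ≠ b.1 := fun h => hab (Subtype.ext h)
      have hdisj : Disjoint a.1 b.1 := hBdisj a.2 b.2 hvals
      have hnotX : ∀ (d : α), d ∈ D → d ∉ X := fun d hd hdX =>
        (Finset.disjoint_left.mp hXD) hdX hd
      have haX : a.1 ⊆ X := (hC a.1 (hBC a.2)).2
      have hbX : b.1 ⊆ X := (hC b.1 (hBC b.2)).2
      rw [Finset.disjoint_left]
      intro x hx hx'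
      simp only [Finset.mem_insert] at hx hx'
      rcases hx with rfl | hx
      · rcases hx' with h | h
        · exact hab (e.injective (Subtype.ext h))
        · exact hnotX _ (e a).2 (hbX h)
      · rcases hx' with rfl | h
        · exact hnotX _ (e b).2 (haX hx)
        · exact Finset.disjoint_left.mp hdisj hx h
    · ext x
      simp only [Finset.mem_biUnion, Finset.mem_image, Finset.mem_attach, true_and, id,
        Finset.mem_union]
      constructor
      · rintro ⟨s, ⟨a, rfl⟩, hx⟩
        rcases Finset.mem_insert.mp hx with rfl | hx
        · exact Or.inr (e a).2
        · exact Or.inl ((hC a.1 (hBC a.2)).2 hx)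
      · rintro (hx | hx)
        · rw [← hBunion] at hx
          obtain ⟨s, hs, hxs⟩ := Finset.mem_biUnion.mp hx
          exact ⟨_, ⟨⟨s, hs⟩, rfl⟩, Finset.mem_insert_of_mem hxs⟩
        · refine ⟨_, ⟨e.symm ⟨x, hx⟩, rfl⟩, ?_⟩
          have : (e (e.symm ⟨x, hx⟩) : α) = x := by rw [e.apply_symm_apply]
          rw [this]
          exact Finset.mem_insert_self _ _
  · rintro ⟨B, hBC, hBdisj, hBunion⟩
    have hkey : ∀ b ∈ B, b ∩ X ∈ C ∧ ∃ d ∈ D, b = insert d (b ∩ X) := by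
      intro b hb
      obtain ⟨⟨c, d⟩, hcd, rfl⟩ := Finset.mem_image.mp (hBC hb)
      obtain ⟨hc, hd⟩ := Finset.mem_product.mp hcd
      have hcX : c ⊆ X := (hC c hc).2
      have hdX : d ∉ X := fun h => Finset.disjoint_left.mp hXD h hd
      have hinter : insert d c ∩ X = c := by
        rw [Finset.insert_inter_of_notMem hdX, Finset.inter_eq_left.mpr hcX]
      rw [hinter]
      exact ⟨hc, d, hd, rfl⟩
    refine ⟨B.image (· ∩ X), ?_, ?_, ?_⟩
    · intro s hs
      obtain ⟨b, hb, rfl⟩ := Finset.mem_image.mp hs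
      exact (hkey b hb).1
    · intro s hs t ht hst
      simp only [Finset.coe_image, Set.mem_image, Finset.mem_coe] at hs ht
      obtain ⟨b, hb, rfl⟩ := hs
      obtain ⟨b', hb', rfl⟩ := ht
      have hbb : b ≠ b' := by rintro rfl; exact hst rfl
      exact (hBdisj hb hb' hbb).mono Finset.inter_subset_left Finset.inter_subset_left
    · have : (B.image (· ∩ X)).biUnion id = (B.biUnion id) ∩ X := by
        ext x
        simp only [Finset.mem_biUnion, Finset.mem_image, id, Finset.mem_inter]
        constructor
        · rintro ⟨s, ⟨b, hb, rfl⟩, hx⟩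
          exact ⟨⟨b, hb, (Finset.mem_inter.mp hx).1⟩, (Finset.mem_inter.mp hx).2⟩
        · rintro ⟨⟨b, hb, hxb⟩, hxX⟩
          exact ⟨b ∩ X, ⟨b, hb, rfl⟩, Finset.mem_inter.mpr ⟨hxb, hxX⟩⟩
      rw [this, hBunion, Finset.union_inter_cancel_left]
end

section
/- For every 3-regular finite simple graph G, the graph H constructed from G as described satisfies γ_R(H) = 4. -/
/-- A Roman dominating function: labels in {0,1,2} and every vertex labelled 0 has a
neighbour labelled 2. -/
def IsRDF {V : Type*} (G : SimpleGraph V) (f : V → ℕ) : Prop :=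
  (∀ v, f v ≤ 2) ∧ ∀ v, f v = 0 → ∃ w, G.Adj v w ∧ f w = 2

/-- A global Roman dominating function: an RDF for both `G` and its complement. -/
def IsGRDF {V : Type*} (G : SimpleGraph V) (f : V → ℕ) : Prop :=
  IsRDF G f ∧ IsRDF Gᶜ f

/-- The weight of a labelling. -/
def rdfWeight {V : Type*} [Fintype V] (f : V → ℕ) : ℕ := ∑ v, f v

/-- The Roman domination number `γ_R(G)`. -/
noncomputable def romanNumber {V : Type*} [Fintype V] (G : SimpleGraph V) : ℕ :=
  sInf {k | ∃ f, IsRDF G f ∧ rdfWeight f = k}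

/-- The global Roman domination number `γ_gR(G)`. -/
noncomputable def globalRomanNumber {V : Type*} [Fintype V] (G : SimpleGraph V) : ℕ :=
  sInf {k | ∃ f, IsGRDF G f ∧ rdfWeight f = k}

/-- The adjacency relation of the graph `H` built from a (3-regular) graph `G`:
vertices are three copies `u₁,u₂,u₃` of each vertex `u` of `G` together with three
extra vertices `v1,v2,v3` (encoded as `Fin 3`).  Copies `u_i`, `w_j` (u ≠ w) are adjacent
iff `uw` is NOT an edge of `G`; copies of the same vertex are pairwise non-adjacent;
each of `v1,v2,v3` is adjacent to all copies, and `v1,v2,v3` are pairwise non-adjacent. -/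
def hAdj {V : Type*} (G : SimpleGraph V) :
    ((V × Fin 3) ⊕ Fin 3) → ((V × Fin 3) ⊕ Fin 3) → Prop
  | Sum.inl (u, _), Sum.inl (w, _) => u ≠ w ∧ ¬ G.Adj u w
  | Sum.inl _, Sum.inr _ => True
  | Sum.inr _, Sum.inl _ => True
  | Sum.inr _, Sum.inr _ => False

/-- The graph `H` constructed from `G`. -/
def HGraph {V : Type*} (G : SimpleGraph V) : SimpleGraph ((V × Fin 3) ⊕ Fin 3) where
  Adj := hAdj G
  symm := by
    constructor
    rintro (⟨u, i⟩ | i) (⟨w, j⟩ | j) h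
    · exact ⟨h.1.symm, fun hadj => h.2 hadj.symm⟩
    · trivial
    · trivial
    · exact h
  loopless := by
    constructor
    rintro (⟨u, i⟩ | i) h
    · exact h.1 rfl
    · exact h

lemma fin3_facts : ∀ i : Fin 3, i + 1 ≠ i ∧ i + 2 ≠ i ∧ i + 1 ≠ i + 2 := by decide

lemma sum_two_le {α : Type*} [Fintype α] [DecidableEq α] (f : α → ℕ) {a b : α}
    (hab : a ≠ b) : f a + f b ≤ ∑ v, f v := by
  calc f a + f b = ∑ v ∈ ({a, b} : Finset α), f v := (Finset.sum_pair hab).symm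
    _ ≤ _ := Finset.sum_le_sum_of_subset (Finset.subset_univ _)

lemma sum_three_le {α : Type*} [Fintype α] [DecidableEq α] (f : α → ℕ) {a b c : α}
    (hab : a ≠ b) (hac : a ≠ c) (hbc : b ≠ c) : f a + f b + f c ≤ ∑ v, f v := by
  calc f a + f b + f c = ∑ v ∈ ({a, b, c} : Finset α), f v := by
        rw [Finset.sum_insert (by simp [hab, hac]),
            Finset.sum_insert (by simp [hbc]), Finset.sum_singleton, add_assoc]
    _ ≤ _ := Finset.sum_le_sum_of_subset (Finset.subset_univ _)

lemma sum_four_le {α : Type*} [Fintype α] [DecidableEq α] (f : α → ℕ) {a b c d : α}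
    (hab : a ≠ b) (hac : a ≠ c) (had : a ≠ d) (hbc : b ≠ c) (hbd : b ≠ d) (hcd : c ≠ d) :
    f a + f b + f c + f d ≤ ∑ v, f v := by
  calc f a + f b + f c + f d = ∑ v ∈ ({a, b, c, d} : Finset α), f v := by
        rw [Finset.sum_insert (by simp [hab, hac, had]),
            Finset.sum_insert (by simp [hbc, hbd]),
            Finset.sum_insert (by simp [hcd]), Finset.sum_singleton]
        ring
    _ ≤ _ := Finset.sum_le_sum_of_subset (Finset.subset_univ _)

/-- for every 3-regular finite simple graph `G`, the graph `H`
constructed from `G` satisfies `γ_R(H) = 4`. -/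
theorem romanNumber_HGraph_eq_four {V : Type*} [Fintype V] [DecidableEq V] [Nonempty V]
    (G : SimpleGraph V) [DecidableRel G.Adj]
    (hreg : ∀ v : V, G.degree v = 3) :
    romanNumber (HGraph G) = 4 := by
  classical
  obtain ⟨u0⟩ := ‹Nonempty V›
  set A : (V × Fin 3) ⊕ Fin 3 := Sum.inr 0 with hA
  set B : (V × Fin 3) ⊕ Fin 3 := Sum.inl (u0, 0) with hB
  have hmem : (4 : ℕ) ∈ {k | ∃ f, IsRDF (HGraph G) f ∧ rdfWeight f = k} := by
    refine ⟨fun x => if x = A ∨ x = B then 2 else 0, ⟨?_, ?_⟩, ?_⟩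
    · intro v; dsimp only; split <;> omega
    · rintro (⟨w, j⟩ | j) h0
      · exact ⟨A, trivial, by simp⟩
      · exact ⟨B, trivial, by simp⟩
    · show (∑ x, if x = A ∨ x = B then 2 else 0) = 4
      rw [Finset.sum_eq_add A B (by simp [hA, hB])
        (fun c _ hc => by simp [hc.1, hc.2])
        (fun h => absurd (Finset.mem_univ A) h)
        (fun h => absurd (Finset.mem_univ B) h)]
      simp
  refine le_antisymm (Nat.sInf_le hmem) (le_csInf ⟨4, hmem⟩ ?_)
  rintro k ⟨f, ⟨hle, hdom⟩, rfl⟩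
  show 4 ≤ ∑ v, f v
  by_cases h2 : ∃ s, f s = 2
  · obtain ⟨s, hs⟩ := h2
    by_cases huniq : ∀ t, f t = 2 → t = s
    · -- unique vertex labelled 2: find two non-neighbours of s
      have key : ∀ a : (V × Fin 3) ⊕ Fin 3, ¬ (HGraph G).Adj a s → 1 ≤ f a := by
        intro a hna
        rcases Nat.eq_zero_or_pos (f a) with h0 | h1
        · obtain ⟨w, hw, hw2⟩ := hdom a h0
          exact absurd hw (by rwa [huniq w hw2] at hw ⊢)
        · exact h1
      obtain ⟨a, b, hab, has, hbs, hna, hnb⟩ :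
          ∃ a b, a ≠ b ∧ a ≠ s ∧ b ≠ s ∧ ¬ (HGraph G).Adj a s ∧ ¬ (HGraph G).Adj b s := by
        rcases s with ⟨u, i⟩ | i
        · obtain ⟨h1, h2, h3⟩ := fin3_facts i
          exact ⟨Sum.inl (u, i + 1), Sum.inl (u, i + 2), by simpa using h3,
            by simpa using h1, by simpa using h2,
            fun h => h.1 rfl, fun h => h.1 rfl⟩
        · obtain ⟨h1, h2, h3⟩ := fin3_facts i
          exact ⟨Sum.inr (i + 1), Sum.inr (i + 2), by simpa using h3,
            by simpa using h1, by simpa using h2, fun h => h, fun h => h⟩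
      have hsum := sum_three_le f has.symm hbs.symm hab
      have h1a := key a hna
      have h1b := key b hnb
      omega
    · push_neg at huniq
      obtain ⟨t, ht2, hts⟩ := huniq
      have := sum_two_le f hts
      omega
  · -- no vertex labelled 2: every vertex is labelled ≥ 1
    push_neg at h2
    have h1 : ∀ v, 1 ≤ f v := by
      intro v
      rcases Nat.eq_zero_or_pos (f v) with h0 | h
      · obtain ⟨w, _, hw2⟩ := hdom v h0
        exact absurd hw2 (h2 w)
      · exact h
    have := sum_four_le f (a := A) (b := Sum.inr 1) (c := Sum.inr 2) (d := B)
      (by simp [hA]) (by simp [hA, hB]) (by simp [hA, hB]) (by simp) (by simp [hB]) (by simp [hB])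
    have := h1 A; have := h1 (Sum.inr 1); have := h1 (Sum.inr 2); have := h1 B
    omega
end

section
/- Let G be a 3-regular finite simple graph and let H be the graph constructed from G as described. If f is a minimum weighted global Roman dominating function of H, then exactly one vertex among v1, v2, v3 is assigned the label 2 by f while the other two are assigned the label 0. -/
section aux
variable {V : Type*} (G : SimpleGraph V)

lemma hg_adj_li (x : V × Fin 3) (i : Fin 3) : (HGraph G).Adj (Sum.inl x) (Sum.inr i) := by
  obtain ⟨u, k⟩ := x
  show hAdj G (Sum.inl (u,k)) (Sum.inr i)
  trivial

lemma hg_adj_ri (x : V × Fin 3) (i : Fin 3) : (HGraph G).Adj (Sum.inr i) (Sum.inl x) := by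
  obtain ⟨u, k⟩ := x
  show hAdj G (Sum.inr i) (Sum.inl (u,k))
  trivial

lemma hg_not_adj_rr (i j : Fin 3) : ¬ (HGraph G).Adj (Sum.inr i) (Sum.inr j) := fun h => h

lemma hgc_adj_rr {i j : Fin 3} (h : i ≠ j) : (HGraph G)ᶜ.Adj (Sum.inr i) (Sum.inr j) := by
  rw [SimpleGraph.compl_adj]
  exact ⟨by simp [h], hg_not_adj_rr G i j⟩

lemma hgc_not_adj_li (x : V × Fin 3) (i : Fin 3) : ¬ (HGraph G)ᶜ.Adj (Sum.inl x) (Sum.inr i) := by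
  rw [SimpleGraph.compl_adj]
  push_neg
  intro _
  exact hg_adj_li G x i

lemma hgc_not_adj_ri (x : V × Fin 3) (i : Fin 3) : ¬ (HGraph G)ᶜ.Adj (Sum.inr i) (Sum.inl x) := by
  rw [SimpleGraph.compl_adj]
  push_neg
  intro _
  exact hg_adj_ri G x i

lemma hgc_adj_same (u : V) {k l : Fin 3} (h : k ≠ l) :
    (HGraph G)ᶜ.Adj (Sum.inl (u, k)) (Sum.inl (u, l)) := by
  rw [SimpleGraph.compl_adj]
  refine ⟨by simp [h], fun hadj => ?_⟩
  exact hadj.1 rfl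

/-- The canonical small GRDF of `HGraph G`. -/
noncomputable def f0 : ((V × Fin 3) ⊕ Fin 3) → ℕ :=
  Sum.elim (fun x => if x.2 = 0 then 2 else 0) (fun i => if i = 0 then 2 else 0)

variable [Nonempty V]

lemma f0_grdf : IsGRDF (HGraph G) (f0 (V := V)) := by
  classical
  obtain ⟨u0⟩ := ‹Nonempty V›
  constructor
  · constructor
    · rintro (x | i) <;> simp [f0] <;> split <;> omega
    · rintro (⟨u, k⟩ | i) hv
      · exact ⟨Sum.inr 0, hg_adj_li G (u, k) 0, by simp [f0]⟩
      · exact ⟨Sum.inl (u0, 0), hg_adj_ri G (u0, 0) i, by simp [f0]⟩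
  · constructor
    · rintro (x | i) <;> simp [f0] <;> split <;> omega
    · rintro (⟨u, k⟩ | i) hv
      · have hk : k ≠ 0 := by
          intro h; simp [f0, h] at hv
        exact ⟨Sum.inl (u, 0), hgc_adj_same G u hk, by simp [f0]⟩
      · have hi : i ≠ 0 := by
          intro h; simp [f0, h] at hv
        exact ⟨Sum.inr 0, hgc_adj_rr G hi, by simp [f0]⟩

omit [Nonempty V] in
lemma f0_weight [Fintype V] : rdfWeight (f0 (V := V)) = 2 * Fintype.card V + 2 := by
  classical
  unfold rdfWeight f0
  rw [Fintype.sum_sum_type]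
  have h1 : ∑ x : V × Fin 3, (fun x : V × Fin 3 => if x.2 = 0 then 2 else 0) x
      = 2 * Fintype.card V := by
    rw [Fintype.sum_prod_type]
    simp [Fin.sum_univ_three, mul_comm]
  have h2 : ∑ i : Fin 3, (fun i : Fin 3 => if i = 0 then 2 else 0) i = 2 := by
    simp [Fin.sum_univ_three]
  simp only [Sum.elim_inl, Sum.elim_inr] at *
  omega

end aux

/-- if `f` is a minimum weighted global Roman dominating function of `H`,
then exactly one of the vertices `v1,v2,v3` gets label 2 and the other two get label 0. -/
theorem HGraph_min_GRDF_special_labels {V : Type*} [Fintype V] [DecidableEq V] [Nonempty V]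
    (G : SimpleGraph V) [DecidableRel G.Adj]
    (hreg : ∀ v : V, G.degree v = 3)
    (f : ((V × Fin 3) ⊕ Fin 3) → ℕ)
    (hf : IsGRDF (HGraph G) f)
    (hmin : rdfWeight f = globalRomanNumber (HGraph G)) :
    ∃ i : Fin 3, f (Sum.inr i) = 2 ∧ ∀ j : Fin 3, j ≠ i → f (Sum.inr j) = 0 := by
  classical
  -- minimality
  have hmin' : ∀ g, IsGRDF (HGraph G) g → rdfWeight f ≤ rdfWeight g := by
    intro g hg
    rw [hmin]
    exact Nat.sInf_le ⟨g, hg, rfl⟩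
  -- |V| ≥ 4
  have hcard : 4 ≤ Fintype.card V := by
    obtain ⟨v⟩ := ‹Nonempty V›
    have h3 : G.degree v = 3 := hreg v
    have hsub : G.neighborFinset v ⊆ Finset.univ.erase v := by
      intro w hw
      rw [Finset.mem_erase]
      exact ⟨(G.ne_of_adj (by rwa [SimpleGraph.mem_neighborFinset] at hw)).symm, Finset.mem_univ w⟩
    have := Finset.card_le_card hsub
    rw [Finset.card_erase_of_mem (Finset.mem_univ v)] at this
    have hdeg : (G.neighborFinset v).card = 3 := h3
    have hpos : 0 < Fintype.card V := Fintype.card_pos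
    simp [hdeg, Finset.card_univ] at this
    omega
  -- upper bound
  have hub : rdfWeight f ≤ 2 * Fintype.card V + 2 := by
    have := hmin' (f0 (V := V)) (f0_grdf G)
    rwa [f0_weight] at this
  -- Lemma L : some copy gets label 2
  have hL : ∃ x : V × Fin 3, f (Sum.inl x) = 2 := by
    by_contra hcon
    push_neg at hcon
    have h1 : ∀ x : V × Fin 3, 1 ≤ f (Sum.inl x) := by
      intro x
      rcases Nat.eq_zero_or_pos (f (Sum.inl x)) with h0 | h0
      · obtain ⟨w, hadj, hw⟩ := hf.2.2 (Sum.inl x) h0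
        cases w with
        | inl y => exact absurd hw (hcon y)
        | inr i => exact absurd hadj (hgc_not_adj_li G x i)
      · exact h0
    have hsum : 3 * Fintype.card V ≤ rdfWeight f := by
      unfold rdfWeight
      rw [Fintype.sum_sum_type]
      have : ∑ x : V × Fin 3, 1 ≤ ∑ x : V × Fin 3, f (Sum.inl x) :=
        Finset.sum_le_sum fun x _ => h1 x
      simp only [Finset.sum_const, Finset.card_univ, smul_eq_mul, mul_one,
        Fintype.card_prod, Fintype.card_fin] at this
      omega
    omega
  obtain ⟨x0, hx0⟩ := hL
  -- some v_i gets label 2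
  have hM : ∃ i : Fin 3, f (Sum.inr i) = 2 := by
    by_contra hcon
    push_neg at hcon
    have hones : ∀ i : Fin 3, f (Sum.inr i) = 1 := by
      intro i
      have hle := hf.1.1 (Sum.inr i)
      rcases Nat.eq_zero_or_pos (f (Sum.inr i)) with h0 | h0
      · obtain ⟨w, hadj, hw⟩ := hf.2.2 (Sum.inr i) h0
        cases w with
        | inl y => exact absurd hadj (hgc_not_adj_ri G y i)
        | inr j => exact absurd hw (hcon j)
      · have := hcon i
        omega
    set f' : ((V × Fin 3) ⊕ Fin 3) → ℕ :=
      Sum.elim (fun y => f (Sum.inl y)) (fun j => if j = 0 then 2 else 0) with hf'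
    have hgrdf' : IsGRDF (HGraph G) f' := by
      constructor
      · constructor
        · rintro (y | j)
          · exact hf.1.1 (Sum.inl y)
          · simp [hf']; split <;> omega
        · rintro (y | j) hv
          · exact ⟨Sum.inr 0, hg_adj_li G y 0, by simp [hf']⟩
          · exact ⟨Sum.inl x0, hg_adj_ri G x0 j, by simpa [hf'] using hx0⟩
      · constructor
        · rintro (y | j)
          · exact hf.1.1 (Sum.inl y)
          · simp [hf']; split <;> omega
        · rintro (y | j) hv
          · simp only [hf', Sum.elim_inl] at hv
            obtain ⟨w, hadj, hw⟩ := hf.2.2 (Sum.inl y) hv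
            cases w with
            | inl z => exact ⟨Sum.inl z, hadj, by simpa [hf'] using hw⟩
            | inr k => exact absurd hadj (hgc_not_adj_li G y k)
          · have hj : j ≠ 0 := by
              intro h; simp [hf', h] at hv
            exact ⟨Sum.inr 0, hgc_adj_rr G hj, by simp [hf']⟩
    have hw' : rdfWeight f' + 1 = rdfWeight f := by
      unfold rdfWeight
      rw [Fintype.sum_sum_type, Fintype.sum_sum_type]
      have e1 : ∑ j : Fin 3, f' (Sum.inr j) = 2 := by
        simp [hf', Fin.sum_univ_three]
      have e2 : ∑ j : Fin 3, f (Sum.inr j) = 3 := by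
        simp [Fin.sum_univ_three, hones]
      have e3 : ∑ y : V × Fin 3, f' (Sum.inl y) = ∑ y : V × Fin 3, f (Sum.inl y) := by
        simp [hf']
      omega
    have := hmin' f' hgrdf'
    omega
  obtain ⟨i, hi⟩ := hM
  refine ⟨i, hi, ?_⟩
  intro j hji
  by_contra hj0
  have hj1 : 1 ≤ f (Sum.inr j) := Nat.one_le_iff_ne_zero.mpr hj0
  set f' : ((V × Fin 3) ⊕ Fin 3) → ℕ := Function.update f (Sum.inr j) 0 with hf'
  have hne_li : ∀ y : V × Fin 3, (Sum.inl y : (V × Fin 3) ⊕ Fin 3) ≠ Sum.inr j := by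
    intro y h; exact Sum.inl_ne_inr h
  have hfl : ∀ y : V × Fin 3, f' (Sum.inl y) = f (Sum.inl y) := by
    intro y; simp [hf', Function.update_of_ne (hne_li y)]
  have hfi : f' (Sum.inr i) = 2 := by
    rw [hf', Function.update_of_ne (by simp [hji.symm]), hi]
  have hgrdf' : IsGRDF (HGraph G) f' := by
    constructor
    · constructor
      · intro v
        by_cases hv : v = Sum.inr j
        · simp [hf', hv]
        · rw [hf', Function.update_of_ne hv]; exact hf.1.1 v
      · rintro (y | k) hv
        · exact ⟨Sum.inr i, hg_adj_li G y i, hfi⟩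
        · exact ⟨Sum.inl x0, hg_adj_ri G x0 k, by rw [hfl]; exact hx0⟩
    · constructor
      · intro v
        by_cases hv : v = Sum.inr j
        · simp [hf', hv]
        · rw [hf', Function.update_of_ne hv]; exact hf.1.1 v
      · rintro (y | k) hv
        · rw [hfl] at hv
          obtain ⟨w, hadj, hw⟩ := hf.2.2 (Sum.inl y) hv
          cases w with
          | inl z => exact ⟨Sum.inl z, hadj, by rw [hfl]; exact hw⟩
          | inr m => exact absurd hadj (hgc_not_adj_li G y m)
        · by_cases hk : k = i
          · rw [hk, hfi] at hv; omega
          · exact ⟨Sum.inr i, hgc_adj_rr G hk, hfi⟩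
  have hw' : rdfWeight f' + f (Sum.inr j) = rdfWeight f := by
    unfold rdfWeight
    rw [← Finset.sum_erase_add Finset.univ f (Finset.mem_univ (Sum.inr j)),
        ← Finset.sum_erase_add Finset.univ f' (Finset.mem_univ (Sum.inr j))]
    have e1 : ∑ x ∈ Finset.univ.erase (Sum.inr j), f' x
        = ∑ x ∈ Finset.univ.erase (Sum.inr j), f x := by
      refine Finset.sum_congr rfl fun x hx => ?_
      rw [hf', Function.update_of_ne (Finset.ne_of_mem_erase hx)]
    have e2 : f' (Sum.inr j) = 0 := by simp [hf']
    omega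
  have := hmin' f' hgrdf'
  omega
end

section
/- Let G be a 3-regular finite simple graph and let H be the graph constructed from G as described. If f is a minimum weighted global Roman dominating function of H, then every vertex of H is assigned a label from {0, 2} by f (no vertex receives label 1). -/
section Aux

variable {V : Type*} [Fintype V] [DecidableEq V]

lemma HG_adj_ll (G : SimpleGraph V) {u w : V} {i j : Fin 3} :
    (HGraph G).Adj (Sum.inl (u,i)) (Sum.inl (w,j)) ↔ u ≠ w ∧ ¬G.Adj u w := Iff.rfl

lemma HG_adj_lr (G : SimpleGraph V) (a : V × Fin 3) (b : Fin 3) :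
    (HGraph G).Adj (Sum.inl a) (Sum.inr b) := by
  obtain ⟨u, i⟩ := a; trivial

lemma HG_adj_rl (G : SimpleGraph V) (b : Fin 3) (a : V × Fin 3) :
    (HGraph G).Adj (Sum.inr b) (Sum.inl a) := by
  obtain ⟨u, i⟩ := a; trivial

lemma HG_not_adj_rr (G : SimpleGraph V) (b b' : Fin 3) :
    ¬ (HGraph G).Adj (Sum.inr b) (Sum.inr b') := fun h => h

lemma HG_not_compl_lr (G : SimpleGraph V) (a : V × Fin 3) (b : Fin 3) :
    ¬ (HGraph G)ᶜ.Adj (Sum.inl a) (Sum.inr b) := fun h => h.2 (HG_adj_lr G a b)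

lemma HG_not_compl_rl (G : SimpleGraph V) (b : Fin 3) (a : V × Fin 3) :
    ¬ (HGraph G)ᶜ.Adj (Sum.inr b) (Sum.inl a) := fun h => h.2 (HG_adj_rl G b a)

lemma HG_compl_rr (G : SimpleGraph V) {b b' : Fin 3} (h : b ≠ b') :
    (HGraph G)ᶜ.Adj (Sum.inr b) (Sum.inr b') := by
  rw [SimpleGraph.compl_adj]
  exact ⟨by simp [h], HG_not_adj_rr G b b'⟩

lemma HG_compl_same (G : SimpleGraph V) {u : V} {i j : Fin 3} (h : i ≠ j) :
    (HGraph G)ᶜ.Adj (Sum.inl (u,i)) (Sum.inl (u,j)) := by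
  rw [SimpleGraph.compl_adj]
  exact ⟨by simp [h], fun hadj => hadj.1 rfl⟩

end Aux

section AuxX
variable {X : Type*} [Fintype X] [DecidableEq X]

lemma rdfWeight_update_add_one (f : X → ℕ) (z : X) (hz : f z = 1) :
    rdfWeight (Function.update f z 0) + 1 = rdfWeight f := by
  unfold rdfWeight
  rw [Finset.sum_update_of_mem (Finset.mem_univ z),
      ← Finset.add_sum_erase Finset.univ f (Finset.mem_univ z), hz,
      ← Finset.erase_eq]
  omega

lemma isGRDF_update_zero {H : SimpleGraph X} {f : X → ℕ} {z : X}
    (hf : IsGRDF H f) (hz : f z = 1)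
    (h1 : ∃ w, H.Adj z w ∧ f w = 2) (h2 : ∃ w, Hᶜ.Adj z w ∧ f w = 2) :
    IsGRDF H (Function.update f z 0) := by
  have key : ∀ w, f w = 2 → Function.update f z 0 w = 2 := by
    intro w hw
    have hwz : w ≠ z := by intro h; rw [h, hz] at hw; exact absurd hw (by norm_num)
    rw [Function.update_of_ne hwz]; exact hw
  have bound : ∀ v, Function.update f z 0 v ≤ 2 := by
    intro v; rw [Function.update_apply]
    split
    · omega
    · exact hf.1.1 v
  refine ⟨⟨bound, ?_⟩, ⟨bound, ?_⟩⟩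
  · intro v hv
    by_cases hvz : v = z
    · subst hvz; obtain ⟨w, hwa, hwv⟩ := h1; exact ⟨w, hwa, key w hwv⟩
    · rw [Function.update_of_ne hvz] at hv
      obtain ⟨w, hwa, hwv⟩ := hf.1.2 v hv
      exact ⟨w, hwa, key w hwv⟩
  · intro v hv
    by_cases hvz : v = z
    · subst hvz; obtain ⟨w, hwa, hwv⟩ := h2; exact ⟨w, hwa, key w hwv⟩
    · rw [Function.update_of_ne hvz] at hv
      obtain ⟨w, hwa, hwv⟩ := hf.2.2 v hv
      exact ⟨w, hwa, key w hwv⟩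

end AuxX

section Base
variable {V : Type*} [Fintype V] [DecidableEq V]

/-- baseline GRDF of weight 2|V|+4 -/
def gBase (V : Type*) [DecidableEq V] : (V × Fin 3) ⊕ Fin 3 → ℕ :=
  Sum.elim (fun a => if a.2 = 0 then 2 else 0) (fun b => if b = 2 then 0 else 2)

lemma gBase_isGRDF (G : SimpleGraph V) [Nonempty V] : IsGRDF (HGraph G) (gBase V) := by
  have bound : ∀ v, gBase V v ≤ 2 := by
    rintro (⟨u, j⟩ | b) <;> simp [gBase] <;> split <;> omega
  refine ⟨⟨bound, ?_⟩, ⟨bound, ?_⟩⟩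
  · rintro (⟨u, j⟩ | b) h
    · exact ⟨Sum.inr 0, HG_adj_lr G _ _, by simp [gBase]⟩
    · obtain ⟨u⟩ := ‹Nonempty V›
      exact ⟨Sum.inl (u, 0), HG_adj_rl G _ _, by simp [gBase]⟩
  · rintro (⟨u, j⟩ | b) h
    · have hj : j ≠ 0 := by
        intro h0; rw [h0] at h; simp [gBase] at h
      exact ⟨Sum.inl (u, 0), HG_compl_same G hj, by simp [gBase]⟩
    · have hb : b ≠ 0 := by
        intro h0; rw [h0] at h; simp [gBase] at h
      exact ⟨Sum.inr 0, HG_compl_rr G hb, by simp [gBase]⟩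

lemma gBase_weight : rdfWeight (gBase V) = 2 * Fintype.card V + 4 := by
  unfold rdfWeight gBase
  rw [Fintype.sum_sum_type]
  simp [Fintype.sum_prod_type, Fin.sum_univ_three, mul_comm]

end Base

set_option maxHeartbeats 1000000 in
/-- if `f` is a minimum weighted global Roman dominating function of `H`,
then every vertex of `H` receives a label from `{0, 2}`. -/
theorem HGraph_min_GRDF_labels_zero_or_two {V : Type*} [Fintype V] [DecidableEq V] [Nonempty V]
    (G : SimpleGraph V) [DecidableRel G.Adj]
    (hreg : ∀ v : V, G.degree v = 3)
    (f : ((V × Fin 3) ⊕ Fin 3) → ℕ)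
    (hf : IsGRDF (HGraph G) f)
    (hmin : rdfWeight f = globalRomanNumber (HGraph G)) :
    ∀ z : (V × Fin 3) ⊕ Fin 3, f z = 0 ∨ f z = 2 := by
  classical
  have hb := hf.1.1
  have hH := hf.1.2
  have hC := hf.2.2
  have contra : ∀ g, IsGRDF (HGraph G) g → rdfWeight g < rdfWeight f → False := by
    intro g hg hlt
    have : rdfWeight f ≤ rdfWeight g := by
      rw [hmin]; exact Nat.sInf_le ⟨g, hg, rfl⟩
    omega
  have hV4 : 4 ≤ Fintype.card V := by
    obtain ⟨v⟩ := ‹Nonempty V›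
    have h1 : (insert v (G.neighborFinset v)).card ≤ Fintype.card V := by
      rw [← Finset.card_univ]; exact Finset.card_le_card (Finset.subset_univ _)
    rw [Finset.card_insert_of_notMem (G.notMem_neighborFinset_self v)] at h1
    have h2 := hreg v
    rw [← SimpleGraph.card_neighborFinset_eq_degree] at h2
    omega
  have hsum : rdfWeight f =
      (∑ a : V × Fin 3, f (Sum.inl a)) + ∑ b : Fin 3, f (Sum.inr b) :=
    Fintype.sum_sum_type f
  have heavy : (∀ a : V × Fin 3, 1 ≤ f (Sum.inl a)) →
      1 ≤ ∑ b : Fin 3, f (Sum.inr b) → False := by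
    intro h1 h2
    have hA : Fintype.card V * 3 ≤ ∑ a : V × Fin 3, f (Sum.inl a) := by
      calc Fintype.card V * 3 = ∑ _a : V × Fin 3, 1 := by
            simp [Fintype.card_prod]
        _ ≤ _ := Finset.sum_le_sum fun a _ => h1 a
    apply contra (gBase V) (gBase_isGRDF G)
    rw [gBase_weight, hsum]
    omega
  intro z
  by_contra hz
  push_neg at hz
  have hz1 : f z = 1 := by have := hb z; omega
  clear hz
  obtain (⟨u, i⟩ | i) := z
  · -- z = Sum.inl (u, i)
    by_cases hA2 : ∃ w, (HGraph G).Adj (Sum.inl (u,i)) w ∧ f w = 2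
    · by_cases hC2 : ∃ w, (HGraph G)ᶜ.Adj (Sum.inl (u,i)) w ∧ f w = 2
      · -- direct reduction
        exact contra _ (isGRDF_update_zero hf hz1 hA2 hC2)
          (by have := rdfWeight_update_add_one f _ hz1; omega)
      · -- no 2-labelled neighbour in the complement: all copies of u are 1
        push_neg at hC2
        obtain ⟨w2, hw2a, hw2v⟩ := hA2
        have hcop : ∀ j : Fin 3, f (Sum.inl (u, j)) = 1 := by
          intro j
          by_cases hji : j = i
          · rw [hji]; exact hz1
          · have hne2 : f (Sum.inl (u,j)) ≠ 2 :=
              hC2 (Sum.inl (u,j)) (HG_compl_same G (Ne.symm hji))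
            have hne0 : f (Sum.inl (u,j)) ≠ 0 := by
              intro h0
              obtain ⟨w, hwa, hwv⟩ := hC _ h0
              refine hC2 w ?_ hwv
              obtain (⟨x, k⟩ | b) := w
              · rw [SimpleGraph.compl_adj] at hwa ⊢
                refine ⟨?_, hwa.2⟩
                intro he
                rw [← he] at hwv
                omega
              · exact absurd hwa (HG_not_compl_lr G _ _)
            have := hb (Sum.inl (u,j)); omega
        have hw2u : ∀ w, f w = 2 → ∀ k : Fin 3, w ≠ Sum.inl (u, k) := by
          intro w hw k he
          rw [he, hcop k] at hw; omega
        set g : (V × Fin 3) ⊕ Fin 3 → ℕ :=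
          Sum.elim (fun a => if a.1 = u then (if a.2 = i then 2 else 0)
            else f (Sum.inl a)) (fun b => f (Sum.inr b)) with hgdef
        have key : ∀ w, f w = 2 → g w = 2 := by
          rintro (⟨x, k⟩ | b) hw
          · have hxu : x ≠ u := by
              intro he; exact hw2u _ hw k (by rw [he])
            simpa [hgdef, hxu] using hw
          · exact hw
        have hadj_same : ∀ (k : Fin 3) (w : (V × Fin 3) ⊕ Fin 3),
            (HGraph G).Adj (Sum.inl (u,i)) w → (HGraph G).Adj (Sum.inl (u,k)) w := by
          intro k w hw
          obtain (⟨x, m⟩ | b) := w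
          · exact hw
          · exact HG_adj_lr G _ _
        have gbound : ∀ v, g v ≤ 2 := by
          rintro (⟨x, k⟩ | b)
          · simp only [hgdef, Sum.elim_inl]
            split
            · split <;> omega
            · exact hb _
          · exact hb _
        apply contra g
        · refine ⟨⟨gbound, ?_⟩, ⟨gbound, ?_⟩⟩
          · rintro (⟨x, k⟩ | b) h0
            · by_cases hxu : x = u
              · subst hxu
                exact ⟨w2, hadj_same k w2 hw2a, key w2 hw2v⟩
              · simp only [hgdef, Sum.elim_inl, if_neg hxu] at h0
                obtain ⟨w, hwa, hwv⟩ := hH _ h0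
                exact ⟨w, hwa, key w hwv⟩
            · obtain ⟨w, hwa, hwv⟩ := hH _ h0
              exact ⟨w, hwa, key w hwv⟩
          · rintro (⟨x, k⟩ | b) h0
            · by_cases hxu : x = u
              · subst hxu
                have hki : k ≠ i := by
                  intro he; rw [he] at h0; simp [hgdef] at h0
                exact ⟨Sum.inl (x, i), HG_compl_same G hki, by simp [hgdef]⟩
              · simp only [hgdef, Sum.elim_inl, if_neg hxu] at h0
                obtain ⟨w, hwa, hwv⟩ := hC _ h0
                exact ⟨w, hwa, key w hwv⟩
            · obtain ⟨w, hwa, hwv⟩ := hC _ h0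
              exact ⟨w, hwa, key w hwv⟩
        · -- weight comparison
          have h1 : rdfWeight g =
              (∑ a : V × Fin 3, g (Sum.inl a)) + ∑ b : Fin 3, g (Sum.inr b) :=
            Fintype.sum_sum_type g
          have hBeq : (∑ b : Fin 3, g (Sum.inr b)) = ∑ b : Fin 3, f (Sum.inr b) := rfl
          have hAeq : (∑ a : V × Fin 3, g (Sum.inl a)) + 1
              = ∑ a : V × Fin 3, f (Sum.inl a) := by
            rw [Fintype.sum_prod_type, Fintype.sum_prod_type]
            rw [← Finset.add_sum_erase Finset.univ
                  (fun x => ∑ j : Fin 3, g (Sum.inl (x, j))) (Finset.mem_univ u),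
                ← Finset.add_sum_erase Finset.univ
                  (fun x => ∑ j : Fin 3, f (Sum.inl (x, j))) (Finset.mem_univ u)]
            have hgu : (∑ j : Fin 3, g (Sum.inl (u, j))) = 2 := by
              simp [hgdef, Finset.sum_ite_eq']
            have hfu : (∑ j : Fin 3, f (Sum.inl (u, j))) = 3 := by
              rw [Fin.sum_univ_three, hcop 0, hcop 1, hcop 2]
            have hrest : ∀ x ∈ Finset.univ.erase u,
                (∑ j : Fin 3, g (Sum.inl (x, j))) = ∑ j : Fin 3, f (Sum.inl (x, j)) := by
              intro x hx
              have hxu : x ≠ u := Finset.ne_of_mem_erase hx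
              exact Finset.sum_congr rfl fun j _ => by simp [hgdef, hxu]
            rw [Finset.sum_congr rfl hrest, hgu, hfu]
            omega
          rw [h1, hsum, hBeq]
          omega
    · -- no 2-labelled H-neighbour of z at all
      push_neg at hA2
      have hinr1 : ∀ b : Fin 3, f (Sum.inr b) = 1 := by
        intro b
        have h2 : f (Sum.inr b) ≠ 2 := hA2 (Sum.inr b) (HG_adj_lr G _ _)
        have h0 : f (Sum.inr b) ≠ 0 := by
          intro h0
          obtain ⟨w, hwa, hwv⟩ := hC _ h0
          obtain (⟨x, k⟩ | b') := w
          · exact HG_not_compl_rl G _ _ hwa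
          · exact hA2 (Sum.inr b') (HG_adj_lr G _ _) hwv
        have := hb (Sum.inr b); omega
      by_cases hEx : ∃ a : V × Fin 3, f (Sum.inl a) = 2
      · obtain ⟨a0, ha0⟩ := hEx
        have ha0ne : ¬ (HGraph G).Adj (Sum.inl (u,i)) (Sum.inl a0) := fun h => hA2 _ h ha0
        have ha0z : (Sum.inl a0 : (V × Fin 3) ⊕ Fin 3) ≠ Sum.inl (u,i) := by
          intro he; rw [he, hz1] at ha0; omega
        set g : (V × Fin 3) ⊕ Fin 3 → ℕ :=
          Sum.elim (fun a => if a = (u,i) then 0 else f (Sum.inl a))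
            (fun b => if b = 0 then 2 else 0) with hgdef
        have key : ∀ w, f w = 2 → g w = 2 := by
          rintro (⟨x, k⟩ | b) hw
          · have hne : (x, k) ≠ (u, i) := by
              intro he; rw [he, hz1] at hw; omega
            simpa [hgdef, hne] using hw
          · rw [hinr1 b] at hw; omega
        have ga0 : g (Sum.inl a0) = 2 := key _ ha0
        have gbound : ∀ v, g v ≤ 2 := by
          rintro (⟨x, k⟩ | b)
          · simp only [hgdef, Sum.elim_inl]
            split
            · omega
            · exact hb _
          · simp only [hgdef, Sum.elim_inr]; split <;> omega
        apply contra g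
        · refine ⟨⟨gbound, ?_⟩, ⟨gbound, ?_⟩⟩
          · rintro (⟨x, k⟩ | b) h0
            · by_cases hxk : (x, k) = (u, i)
              · exact ⟨Sum.inr 0, HG_adj_lr G _ _, by simp [hgdef]⟩
              · simp only [hgdef, Sum.elim_inl, if_neg hxk] at h0
                obtain ⟨w, hwa, hwv⟩ := hH _ h0
                exact ⟨w, hwa, key w hwv⟩
            · exact ⟨Sum.inl a0, HG_adj_rl G _ _, ga0⟩
          · rintro (⟨x, k⟩ | b) h0
            · by_cases hxk : (x, k) = (u, i)
              · rw [hxk]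
                refine ⟨Sum.inl a0, ?_, ga0⟩
                rw [SimpleGraph.compl_adj]
                exact ⟨Ne.symm ha0z, ha0ne⟩
              · simp only [hgdef, Sum.elim_inl, if_neg hxk] at h0
                obtain ⟨w, hwa, hwv⟩ := hC _ h0
                exact ⟨w, hwa, key w hwv⟩
            · have hbne : b ≠ 0 := by
                intro he; rw [he] at h0; simp [hgdef] at h0
              exact ⟨Sum.inr 0, HG_compl_rr G hbne, by simp [hgdef]⟩
        · have h1 : rdfWeight g =
              (∑ a : V × Fin 3, g (Sum.inl a)) + ∑ b : Fin 3, g (Sum.inr b) :=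
            Fintype.sum_sum_type g
          have hA : (∑ a : V × Fin 3, g (Sum.inl a)) + 1
              = ∑ a : V × Fin 3, f (Sum.inl a) := by
            have hupd : ∀ a : V × Fin 3,
                g (Sum.inl a) = Function.update (fun a : V × Fin 3 => f (Sum.inl a)) (u,i) 0 a := by
              intro a; rw [Function.update_apply]; rfl
            rw [Finset.sum_congr rfl (fun a _ => hupd a),
                Finset.sum_update_of_mem (Finset.mem_univ _),
                ← Finset.add_sum_erase Finset.univ (fun a : V × Fin 3 => f (Sum.inl a))
                  (Finset.mem_univ ((u,i) : V × Fin 3)),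
                ← Finset.erase_eq]
            have hz1' : f (Sum.inl (u,i)) = 1 := hz1
            omega
          have hB : (∑ b : Fin 3, g (Sum.inr b)) = 2 := by
            simp [hgdef, Fin.sum_univ_three]
          have hBf : (∑ b : Fin 3, f (Sum.inr b)) = 3 := by
            rw [Fin.sum_univ_three, hinr1 0, hinr1 1, hinr1 2]
          rw [h1, hsum]
          omega
      · push_neg at hEx
        apply heavy
        · intro a
          by_contra h
          push_neg at h
          have h0 : f (Sum.inl a) = 0 := by omega
          obtain ⟨w, hwa, hwv⟩ := hH _ h0
          obtain (⟨x, k⟩ | b) := w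
          · exact absurd hwv (hEx _)
          · rw [hinr1 b] at hwv; omega
        · rw [Fin.sum_univ_three, hinr1 0, hinr1 1, hinr1 2]; omega
  · -- z = Sum.inr i
    by_cases hEx : ∃ a : V × Fin 3, f (Sum.inl a) = 2
    · obtain ⟨a0, ha0⟩ := hEx
      by_cases hB2 : ∃ j : Fin 3, j ≠ i ∧ f (Sum.inr j) = 2
      · obtain ⟨j, hji, hjv⟩ := hB2
        refine contra _ (isGRDF_update_zero hf hz1
          ⟨Sum.inl a0, HG_adj_rl G _ _, ha0⟩
          ⟨Sum.inr j, HG_compl_rr G (Ne.symm hji), hjv⟩) ?_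
        have := rdfWeight_update_add_one f _ hz1; omega
      · push_neg at hB2
        have hinr1 : ∀ b : Fin 3, f (Sum.inr b) = 1 := by
          intro b
          by_cases hbi : b = i
          · rw [hbi]; exact hz1
          · have h2 : f (Sum.inr b) ≠ 2 := hB2 b hbi
            have h0 : f (Sum.inr b) ≠ 0 := by
              intro h0
              obtain ⟨w, hwa, hwv⟩ := hC _ h0
              obtain (⟨x, k⟩ | b') := w
              · exact HG_not_compl_rl G _ _ hwa
              · by_cases hbi' : b' = i
                · rw [hbi', hz1] at hwv; omega
                · exact hB2 b' hbi' hwv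
            have := hb (Sum.inr b); omega
        set g : (V × Fin 3) ⊕ Fin 3 → ℕ :=
          Sum.elim (fun a => f (Sum.inl a)) (fun b => if b = 0 then 2 else 0) with hgdef
        have key : ∀ w, f w = 2 → g w = 2 := by
          rintro (⟨x, k⟩ | b) hw
          · exact hw
          · rw [hinr1 b] at hw; omega
        have gbound : ∀ v, g v ≤ 2 := by
          rintro (⟨x, k⟩ | b)
          · exact hb _
          · simp only [hgdef, Sum.elim_inr]; split <;> omega
        apply contra g
        · refine ⟨⟨gbound, ?_⟩, ⟨gbound, ?_⟩⟩
          · rintro (⟨x, k⟩ | b) h0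
            · obtain ⟨w, hwa, hwv⟩ := hH _ h0
              exact ⟨w, hwa, key w hwv⟩
            · exact ⟨Sum.inl a0, HG_adj_rl G _ _, key _ ha0⟩
          · rintro (⟨x, k⟩ | b) h0
            · obtain ⟨w, hwa, hwv⟩ := hC _ h0
              exact ⟨w, hwa, key w hwv⟩
            · have hbne : b ≠ 0 := by
                intro he; rw [he] at h0; simp [hgdef] at h0
              exact ⟨Sum.inr 0, HG_compl_rr G hbne, by simp [hgdef]⟩
        · have h1 : rdfWeight g =
              (∑ a : V × Fin 3, g (Sum.inl a)) + ∑ b : Fin 3, g (Sum.inr b) :=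
            Fintype.sum_sum_type g
          have hB : (∑ b : Fin 3, g (Sum.inr b)) = 2 := by
            simp [hgdef, Fin.sum_univ_three]
          have hBf : (∑ b : Fin 3, f (Sum.inr b)) = 3 := by
            rw [Fin.sum_univ_three, hinr1 0, hinr1 1, hinr1 2]
          have hAeq : (∑ a : V × Fin 3, g (Sum.inl a))
              = ∑ a : V × Fin 3, f (Sum.inl a) := rfl
          rw [h1, hsum, hAeq]
          omega
    · push_neg at hEx
      apply heavy
      · intro a
        by_contra h
        push_neg at h
        have h0 : f (Sum.inl a) = 0 := by omega
        obtain ⟨w, hwa, hwv⟩ := hC _ h0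
        obtain (⟨x, k⟩ | b) := w
        · exact absurd hwv (hEx _)
        · exact HG_not_compl_lr G _ _ hwa
      · calc 1 = f (Sum.inr i) := hz1.symm
          _ ≤ _ := Finset.single_le_sum (f := fun b : Fin 3 => f (Sum.inr b))
              (fun b _ => Nat.zero_le _) (Finset.mem_univ i)
end

section
/- Let G be a 3-regular finite simple graph, let k be a positive integer, and let H be the graph constructed from G as described. Then G has a dominating set of size at most k if and only if H has a global Roman dominating function of weight at most 2k+2. -/
/-- a 3-regular graph `G` has a dominating set of size at most `k` iff
the constructed graph `H` has a global Roman dominating function of weight at most `2k+2`. -/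
theorem HGraph_dominatingSet_iff_GRDF {V : Type*} [Fintype V] [DecidableEq V]
    (G : SimpleGraph V) [DecidableRel G.Adj]
    (hreg : ∀ v : V, G.degree v = 3)
    (k : ℕ) (hk : 0 < k) :
    (∃ S : Finset V, S.card ≤ k ∧ ∀ v ∉ S, ∃ u ∈ S, G.Adj v u) ↔
      (∃ f : ((V × Fin 3) ⊕ Fin 3) → ℕ,
        IsGRDF (HGraph G) f ∧ rdfWeight f ≤ 2 * k + 2) := by

  classical
  constructor
  · rintro ⟨S, hcard, hdom⟩
    by_cases hV : Nonempty V
    · -- `S` is nonempty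
      obtain ⟨v0⟩ := hV
      have hSne : ∃ u, u ∈ S := by
        by_contra h
        push_neg at h
        obtain ⟨u, hu, -⟩ := hdom v0 (h v0)
        exact h u hu
      obtain ⟨u0, hu0⟩ := hSne
      have hbd : ∀ v : (V × Fin 3) ⊕ Fin 3,
          Sum.elim (fun p : V × Fin 3 => if p.1 ∈ S ∧ p.2 = 0 then 2 else 0)
            (fun j : Fin 3 => if j = 0 then 2 else 0) v ≤ 2 := by
        rintro (⟨u, i⟩ | j) <;> dsimp <;> split_ifs <;> omega
      refine ⟨Sum.elim (fun p => if p.1 ∈ S ∧ p.2 = 0 then 2 else 0)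
        (fun j => if j = 0 then 2 else 0), ⟨⟨hbd, ?_⟩, hbd, ?_⟩, ?_⟩
      · rintro (⟨u, i⟩ | j) h0
        · exact ⟨Sum.inr 0, trivial, by simp⟩
        · refine ⟨Sum.inl (u0, 0), trivial, by simp [hu0]⟩
      · rintro (⟨u, i⟩ | j) h0
        · dsimp at h0
          by_cases hu : u ∈ S
          · have hi : i ≠ 0 := by
              intro hi0; simp [hu, hi0] at h0
            refine ⟨Sum.inl (u, 0), ?_, by simp [hu]⟩
            rw [SimpleGraph.compl_adj]
            refine ⟨by simp [hi], ?_⟩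
            intro hadj
            exact hadj.1 rfl
          · obtain ⟨w, hw, hadj⟩ := hdom u hu
            refine ⟨Sum.inl (w, 0), ?_, by simp [hw]⟩
            rw [SimpleGraph.compl_adj]
            refine ⟨by simp [G.ne_of_adj hadj], ?_⟩
            intro h
            exact h.2 hadj
        · dsimp at h0
          have hj : j ≠ 0 := by intro h; simp [h] at h0
          refine ⟨Sum.inr 0, ?_, by simp⟩
          rw [SimpleGraph.compl_adj]
          exact ⟨by simp [hj], fun h => h⟩
      · have h1 : ∀ u : V, (∑ i : Fin 3, if u ∈ S ∧ i = 0 then 2 else 0)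
            = if u ∈ S then 2 else 0 := by
          intro u; by_cases hu : u ∈ S <;> simp [Fin.sum_univ_three, hu]
        have h2 : (∑ u : V, if u ∈ S then 2 else 0) = 2 * S.card := by
          rw [Finset.sum_ite_mem, Finset.univ_inter, Finset.sum_const,
            smul_eq_mul, mul_comm]
        have h3 : rdfWeight (Sum.elim (fun p : V × Fin 3 => if p.1 ∈ S ∧ p.2 = 0 then 2 else 0)
            (fun j : Fin 3 => if j = 0 then 2 else 0)) = 2 * S.card + 2 := by
          rw [rdfWeight, Fintype.sum_sum_type, Fintype.sum_prod_type]
          simp only [Sum.elim_inl, Sum.elim_inr]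
          rw [Finset.sum_congr rfl (fun u _ => h1 u), h2]
          norm_num [Fin.sum_univ_three]
        rw [h3]
        omega
    · -- V is empty
      have hbd : ∀ v : (V × Fin 3) ⊕ Fin 3,
          Sum.elim (fun _ : V × Fin 3 => 0) (fun _ : Fin 3 => 1) v ≤ 2 := by
        rintro (⟨u, i⟩ | j) <;> dsimp <;> omega
      refine ⟨Sum.elim (fun _ => 0) (fun _ => 1), ⟨⟨hbd, ?_⟩, hbd, ?_⟩, ?_⟩
      · rintro (⟨u, i⟩ | j) h0
        · exact absurd ⟨u⟩ hV
        · simp at h0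
      · rintro (⟨u, i⟩ | j) h0
        · exact absurd ⟨u⟩ hV
        · simp at h0
      · have : IsEmpty V := not_nonempty_iff.mp hV
        have h3 : rdfWeight (Sum.elim (fun _ : V × Fin 3 => 0) (fun _ : Fin 3 => 1)) = 3 := by
          rw [rdfWeight, Fintype.sum_sum_type]
          simp
        rw [h3]; omega
  · rintro ⟨f, ⟨hH, hHc⟩, hw⟩
    set S : Finset V := Finset.univ.filter
      (fun u => (∃ j, f (Sum.inl (u, j)) = 2) ∨ ∀ j, 1 ≤ f (Sum.inl (u, j))) with hSdef
    have hB : 2 ≤ ∑ j : Fin 3, f (Sum.inr j : (V × Fin 3) ⊕ Fin 3) := by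
      by_cases hall : ∀ j : Fin 3, 1 ≤ f (Sum.inr j)
      · rw [Fin.sum_univ_three]
        have := hall 0; have := hall 1; have := hall 2; omega
      · push_neg at hall
        obtain ⟨j, hj⟩ := hall
        have hj0 : f (Sum.inr j) = 0 := by omega
        obtain ⟨x, hadj, hx2⟩ := hHc.2 _ hj0
        rw [SimpleGraph.compl_adj] at hadj
        match x with
        | Sum.inl p => exact absurd trivial hadj.2
        | Sum.inr j' =>
          calc 2 = f (Sum.inr j') := hx2.symm
            _ ≤ _ := Finset.single_le_sum (f := fun j : Fin 3 => f (Sum.inr j))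
              (fun _ _ => Nat.zero_le _) (Finset.mem_univ j')
    have hA : ∀ u ∈ S, 2 ≤ ∑ j : Fin 3, f (Sum.inl (u, j)) := by
      intro u hu
      rw [hSdef, Finset.mem_filter] at hu
      rcases hu.2 with ⟨j, hj⟩ | hall
      · calc 2 = f (Sum.inl (u, j)) := hj.symm
          _ ≤ _ := Finset.single_le_sum (f := fun j : Fin 3 => f (Sum.inl (u, j)))
            (fun _ _ => Nat.zero_le _) (Finset.mem_univ j)
      · rw [Fin.sum_univ_three]
        have := hall 0; have := hall 1; have := hall 2; omega
    have hsum : 2 * S.card + 2 ≤ rdfWeight f := by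
      have hdec : rdfWeight f = (∑ u : V, ∑ j : Fin 3, f (Sum.inl (u, j)))
          + ∑ j : Fin 3, f (Sum.inr j) := by
        rw [rdfWeight, Fintype.sum_sum_type, Fintype.sum_prod_type]
      have h2 : 2 * S.card ≤ ∑ u : V, ∑ j : Fin 3, f (Sum.inl (u, j)) := by
        calc 2 * S.card = ∑ _u ∈ S, 2 := by rw [Finset.sum_const, smul_eq_mul, mul_comm]
          _ ≤ ∑ u ∈ S, ∑ j : Fin 3, f (Sum.inl (u, j)) := Finset.sum_le_sum hA
          _ ≤ _ := Finset.sum_le_sum_of_subset (Finset.subset_univ S)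
      omega
    refine ⟨S, by omega, ?_⟩
    intro v hv
    rw [hSdef, Finset.mem_filter] at hv
    push_neg at hv
    have hv' := hv (Finset.mem_univ v)
    obtain ⟨hne2, hlt⟩ := hv'
    obtain ⟨i, hi⟩ := hlt
    have hi0 : f (Sum.inl (v, i)) = 0 := by omega
    obtain ⟨x, hadj, hx2⟩ := hHc.2 _ hi0
    rw [SimpleGraph.compl_adj] at hadj
    match x with
    | Sum.inr j => exact absurd trivial hadj.2
    | Sum.inl (w, j) =>
      by_cases hvw : v = w
      · subst hvw
        exact absurd hx2 (hne2 j)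
      · have hGadj : G.Adj v w := by
          by_contra hb
          exact hadj.2 ⟨hvw, hb⟩
        refine ⟨w, ?_, hGadj⟩
        rw [hSdef, Finset.mem_filter]
        exact ⟨Finset.mem_univ w, Or.inl ⟨j, hx2⟩⟩
end

section
/- Let H be the graph constructed from an Exact 4-Cover instance as described. For every Roman dominating function f of H, the weight of f on P ∪ Q ∪ S is at least 8l. -/
/-- The vertices of the graph built from an Exact 4-Cover instance with ground set
`X = Fin (4*l)` (element `x_{i+1}` is `i : Fin (4*l)`) and collection `C : Fin m → _`.
Indices are 0-based: `q i 0` is `q_{i+1}^1`, `q i 1` is `q_{i+1}^2`, `s i t` is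
`s_{i+1}^{t+1}`, and `r k` (for `k : Fin (2*l)`) is the vertex `r_{2k+1}` of the paper
(one vertex for each odd index in `[4l]`, i.e. each even 0-based index `2k`). -/
inductive XVtx (l m : ℕ) : Type
  | a : Fin m → XVtx l m
  | b : Fin (4 * l) → XVtx l m
  | u : XVtx l m
  | v : XVtx l m
  | w : XVtx l m
  | x : XVtx l m
  | p : Fin (4 * l) → XVtx l m
  | q : Fin (4 * l) → Fin 2 → XVtx l m
  | r : Fin (2 * l) → XVtx l m
  | s : Fin (4 * l) → Fin 3 → XVtx l m
  deriving DecidableEq, Fintype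

/-- Base (one-sided) adjacency for the graph built from an Exact 4-Cover instance:
`A` is a clique; `b i ~ a j` iff `x_i ∈ C_j`; `v,w,x` adjacent to all of `A`;
`u ~ v,w,x`; `b i ~ p i`; `p i ~ q i^1, q i^2`; each `s i^t` adjacent to
`p i, q i^1, q i^2`; `r_{2k+1} ~ q_{2k+1}^1, q_{2k+1}^2`; `q_i^2 ~ q_{i+1}^1`
cyclically; and `v, x` adjacent to all of `P ∪ Q`. -/
def xBase {l m : ℕ} (C : Fin m → Finset (Fin (4 * l))) :
    XVtx l m → XVtx l m → Prop
  | .a _, .a _ => True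
  | .b i, .a j => i ∈ C j
  | .v, .a _ => True
  | .w, .a _ => True
  | .x, .a _ => True
  | .u, .v => True
  | .u, .w => True
  | .u, .x => True
  | .b i, .p i' => i = i'
  | .p i, .q i' _ => i = i'
  | .s i _, .p i' => i = i'
  | .s i _, .q i' _ => i = i'
  | .r k, .q i _ => (i : ℕ) = 2 * (k : ℕ)
  | .q i t, .q i' t' => t = 1 ∧ t' = 0 ∧ (i' : ℕ) = ((i : ℕ) + 1) % (4 * l)
  | .v, .p _ => True
  | .v, .q _ _ => True
  | .x, .p _ => True
  | .x, .q _ _ => True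
  | _, _ => False

/-- The graph `H` built from an Exact 4-Cover instance. -/
def XGraph {l m : ℕ} (C : Fin m → Finset (Fin (4 * l))) : SimpleGraph (XVtx l m) where
  Adj a b := a ≠ b ∧ (xBase C a b ∨ xBase C b a)
  symm := ⟨fun _ _ h => ⟨h.1.symm, h.2.symm⟩⟩
  loopless := ⟨fun _ h => h.1 rfl⟩

lemma gadget_ge_two {l m : ℕ} (C : Fin m → Finset (Fin (4 * l)))
    (f : XVtx l m → ℕ) (hf : IsRDF (XGraph C) f) (i : Fin (4 * l)) :
    2 ≤ f (XVtx.p i) + (∑ t, f (XVtx.q i t)) + (∑ t, f (XVtx.s i t)) := by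
  rw [Fin.sum_univ_two, Fin.sum_univ_three]
  by_contra h
  push_neg at h
  have key : ∀ t : Fin 3, f (XVtx.s i t) = 0 → False := by
    intro t hs0
    obtain ⟨w, hadj, hw2⟩ := hf.2 _ hs0
    obtain ⟨-, hb⟩ := hadj
    cases w with
    | p i' =>
      simp only [XGraph, xBase] at hb
      have : i = i' := by tauto
      subst this; omega
    | q i' t' =>
      simp only [XGraph, xBase] at hb
      have : i = i' := by tauto
      subst this
      have h2 : f (XVtx.q i 0) = 2 ∨ f (XVtx.q i 1) = 2 := by
        fin_cases t'
        · exact Or.inl hw2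
        · exact Or.inr hw2
      omega
    | a j => simp [xBase] at hb
    | b j => simp [xBase] at hb
    | u => simp [xBase] at hb
    | v => simp [xBase] at hb
    | w => simp [xBase] at hb
    | x => simp [xBase] at hb
    | r k => simp [xBase] at hb
    | s i' t' => simp [xBase] at hb
  have hs : f (XVtx.s i 0) = 0 ∨ f (XVtx.s i 1) = 0 := by omega
  cases hs with
  | inl hh => exact key 0 hh
  | inr hh => exact key 1 hh

/-- for every Roman dominating function `f` of `H`, the weight of `f` on
`P ∪ Q ∪ S` is at least `8l`. -/
theorem XGraph_RDF_weight_PQS_ge {l m : ℕ} (C : Fin m → Finset (Fin (4 * l)))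
    (hC : ∀ j, (C j).card = 4)
    (f : XVtx l m → ℕ) (hf : IsRDF (XGraph C) f) :
    8 * l ≤ (∑ i, f (XVtx.p i)) + (∑ i, ∑ t, f (XVtx.q i t)) +
      (∑ i, ∑ t, f (XVtx.s i t)) := by
  have h : ∑ i : Fin (4 * l), 2 ≤
      ∑ i : Fin (4 * l), (f (XVtx.p i) + (∑ t, f (XVtx.q i t)) + (∑ t, f (XVtx.s i t))) :=
    Finset.sum_le_sum fun i _ => gadget_ge_two C f hf i
  simp only [Finset.sum_add_distrib, Finset.sum_const, Finset.card_univ,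
    Fintype.card_fin, smul_eq_mul] at h
  omega
end

section
/- Let H be the graph constructed from an Exact 4-Cover instance as described. For every Roman dominating function f of H, the weight of f on A ∪ B ∪ P is at least 2l. -/
/-- for every Roman dominating function `f` of `H`, the weight of `f` on
`A ∪ B ∪ P` is at least `2l`. -/
theorem XGraph_RDF_weight_ABP_ge {l m : ℕ} (C : Fin m → Finset (Fin (4 * l)))
    (hC : ∀ j, (C j).card = 4)
    (f : XVtx l m → ℕ) (hf : IsRDF (XGraph C) f) :
    2 * l ≤ (∑ j, f (XVtx.a j)) + (∑ i, f (XVtx.b i)) + (∑ i, f (XVtx.p i)) := by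

  classical
  obtain ⟨hf2, hf0⟩ := hf
  set SA := ∑ j, f (XVtx.a j) with hSA
  set SB := ∑ i, f (XVtx.b i) with hSB
  set SP := ∑ i, f (XVtx.p i) with hSP
  let T1 : Finset (Fin (4*l)) := Finset.univ.filter (fun i => f (XVtx.b i) ≠ 0)
  let T2 : Finset (Fin (4*l)) := Finset.univ.filter (fun i => f (XVtx.p i) = 2)
  let JA : Finset (Fin m) := Finset.univ.filter (fun j => f (XVtx.a j) = 2)
  let T3 : Finset (Fin (4*l)) := JA.biUnion (fun j => C j)
  have hcover : (Finset.univ : Finset (Fin (4*l))) ⊆ T1 ∪ T2 ∪ T3 := by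
    intro i _
    by_cases hb : f (XVtx.b i) = 0
    · obtain ⟨y, hadj, hy2⟩ := hf0 _ hb
      obtain ⟨-, hxy⟩ := hadj
      cases y with
      | a j =>
        have hij : i ∈ C j := by
          rcases hxy with h | h
          · exact h
          · exact absurd h (by simp [xBase])
        refine Finset.mem_union_right _ (Finset.mem_biUnion.2 ⟨j, ?_, hij⟩)
        simp [JA, hy2]
      | p i' =>
        have hii : i = i' := by
          rcases hxy with h | h
          · exact h
          · exact absurd h (by simp [xBase])
        subst hii
        exact Finset.mem_union_left _ (Finset.mem_union_right _ (by simp [T2, hy2]))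
      | b i' => exact absurd hxy (by simp [xBase])
      | u => exact absurd hxy (by simp [xBase])
      | v => exact absurd hxy (by simp [xBase])
      | w => exact absurd hxy (by simp [xBase])
      | x => exact absurd hxy (by simp [xBase])
      | q i' t => exact absurd hxy (by simp [xBase])
      | r k => exact absurd hxy (by simp [xBase])
      | s i' t => exact absurd hxy (by simp [xBase])
    · exact Finset.mem_union_left _ (Finset.mem_union_left _ (by simp [T1, hb]))
  have h1 : T1.card ≤ SB := by
    calc T1.card = ∑ i ∈ T1, 1 := by simp
    _ ≤ ∑ i ∈ T1, f (XVtx.b i) := by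
        refine Finset.sum_le_sum fun i hi => ?_
        have : f (XVtx.b i) ≠ 0 := (Finset.mem_filter.1 hi).2
        omega
    _ ≤ SB := Finset.sum_le_sum_of_subset (Finset.subset_univ _)
  have h2 : T2.card ≤ SP := by
    calc T2.card = ∑ i ∈ T2, 1 := by simp
    _ ≤ ∑ i ∈ T2, f (XVtx.p i) := by
        refine Finset.sum_le_sum fun i hi => ?_
        have : f (XVtx.p i) = 2 := (Finset.mem_filter.1 hi).2
        omega
    _ ≤ SP := Finset.sum_le_sum_of_subset (Finset.subset_univ _)
  have hJA : 2 * JA.card ≤ SA := by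
    calc 2 * JA.card = ∑ j ∈ JA, 2 := by rw [Finset.sum_const]; ring
    _ = ∑ j ∈ JA, f (XVtx.a j) := by
        refine Finset.sum_congr rfl fun j hj => ?_
        exact ((Finset.mem_filter.1 hj).2).symm
    _ ≤ SA := Finset.sum_le_sum_of_subset (Finset.subset_univ _)
  have h3 : T3.card ≤ 4 * JA.card := by
    calc T3.card ≤ ∑ j ∈ JA, (C j).card := Finset.card_biUnion_le
    _ = ∑ j ∈ JA, 4 := Finset.sum_congr rfl fun j _ => hC j
    _ = 4 * JA.card := by rw [Finset.sum_const]; ring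
  have hbig : 4 * l ≤ T1.card + T2.card + T3.card := by
    have := Finset.card_le_card hcover
    have hcu : (Finset.univ : Finset (Fin (4*l))).card = 4 * l := by simp
    have hu : (T1 ∪ T2 ∪ T3).card ≤ T1.card + T2.card + T3.card := by
      calc (T1 ∪ T2 ∪ T3).card ≤ (T1 ∪ T2).card + T3.card := Finset.card_union_le _ _
      _ ≤ T1.card + T2.card + T3.card :=
          Nat.add_le_add_right (Finset.card_union_le _ _) _
    omega
  omega
end

section
/- Let G_1 and G_2 be cographs, each containing a connected component with at least two vertices, and let G be the disjoint union of G_1 and G_2. Then γ_gR(G) = γ_R(G) = γ_R(G_1) + γ_R(G_2), and moreover γ_R of the complement of G equals γ_R of the join of the complement of G_1 with the complement of G_2. -/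
/-- A cograph: a graph with no induced path on four vertices. -/
def IsCograph {V : Type*} (G : SimpleGraph V) : Prop :=
  ¬ ∃ g : Fin 4 → V, Function.Injective g ∧
      ∀ i j : Fin 4, G.Adj (g i) (g j) ↔ ((i : ℕ) + 1 = j ∨ (j : ℕ) + 1 = i)

/-- The disjoint union of two graphs. -/
def disjUnion {α β : Type*} (G : SimpleGraph α) (H : SimpleGraph β) :
    SimpleGraph (α ⊕ β) where
  Adj a b :=
    match a, b with
    | Sum.inl u, Sum.inl v => G.Adj u v
    | Sum.inr u, Sum.inr v => H.Adj u v
    | _, _ => False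
  symm := by
    refine ⟨?_⟩
    rintro (u | u) (v | v) h
    · exact h.symm
    · exact h.elim
    · exact h.elim
    · exact h.symm
  loopless := by
    refine ⟨?_⟩
    rintro (u | u) h
    · exact G.irrefl h
    · exact H.irrefl h

/-- The join of two graphs: their disjoint union together with all edges between the
two vertex sets. -/
def join {α β : Type*} (G : SimpleGraph α) (H : SimpleGraph β) :
    SimpleGraph (α ⊕ β) where
  Adj a b :=
    match a, b with
    | Sum.inl u, Sum.inl v => G.Adj u v
    | Sum.inr u, Sum.inr v => H.Adj u v
    | _, _ => True
  symm := by
    refine ⟨?_⟩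
    rintro (u | u) (v | v) h
    · exact h.symm
    · trivial
    · trivial
    · exact h.symm
  loopless := by
    refine ⟨?_⟩
    rintro (u | u) h
    · exact G.irrefl h
    · exact H.irrefl h

lemma rdf_one {V : Type*} (G : SimpleGraph V) : IsRDF G (fun _ => 1) :=
  ⟨fun _ => one_le_two, fun _ h => by simp at h⟩

lemma roman_set_nonempty {V : Type*} [Fintype V] (G : SimpleGraph V) :
    {k | ∃ f, IsRDF G f ∧ rdfWeight f = k}.Nonempty :=
  ⟨_, fun _ => 1, rdf_one G, rfl⟩

lemma exists_min_rdf {V : Type*} [Fintype V] (G : SimpleGraph V) :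
    ∃ f, IsRDF G f ∧ rdfWeight f = romanNumber G :=
  Nat.sInf_mem (roman_set_nonempty G)

lemma roman_le {V : Type*} [Fintype V] (G : SimpleGraph V) {f : V → ℕ} (h : IsRDF G f) :
    romanNumber G ≤ rdfWeight f :=
  Nat.sInf_le ⟨f, h, rfl⟩

lemma global_le {V : Type*} [Fintype V] (G : SimpleGraph V) {f : V → ℕ} (h : IsGRDF G f) :
    globalRomanNumber G ≤ rdfWeight f :=
  Nat.sInf_le ⟨f, h, rfl⟩

lemma exists_min_grdf {V : Type*} [Fintype V] (G : SimpleGraph V) :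
    ∃ f, IsGRDF G f ∧ rdfWeight f = globalRomanNumber G :=
  Nat.sInf_mem (⟨rdfWeight (fun _ => (1:ℕ)), fun _ => 1, ⟨rdf_one G, rdf_one Gᶜ⟩, rfl⟩ :
    Set.Nonempty {k | ∃ f, IsGRDF G f ∧ rdfWeight f = k})

lemma exists_edge {V : Type*} (G : SimpleGraph V)
    (h : ∃ u v : V, u ≠ v ∧ G.Reachable u v) : ∃ u v, G.Adj u v := by
  obtain ⟨u, v, hne, hr⟩ := h
  obtain ⟨p⟩ := hr
  cases p with
  | nil => exact absurd rfl hne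
  | cons h _ => exact ⟨_, _, h⟩

lemma exists_min_rdf_two {V : Type*} [Fintype V] (G : SimpleGraph V)
    (hedge : ∃ u v, G.Adj u v) :
    ∃ f, IsRDF G f ∧ rdfWeight f = romanNumber G ∧ ∃ w, f w = 2 := by
  classical
  obtain ⟨f, hf, hfw⟩ := exists_min_rdf G
  by_cases h2 : ∃ w, f w = 2
  · exact ⟨f, hf, hfw, h2⟩
  have hpos : ∀ x, 1 ≤ f x := by
    intro x
    rcases Nat.eq_zero_or_pos (f x) with h | h
    · obtain ⟨w, _, hw2⟩ := hf.2 x h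
      exact absurd ⟨w, hw2⟩ h2
    · exact h
  obtain ⟨u, v, huv⟩ := hedge
  have hne := G.ne_of_adj huv
  set g : V → ℕ := fun x => if x = u then 2 else if x = v then 0 else f x with hg
  have hgu : g u = 2 := by simp [hg]
  have hgv : g v = 0 := by simp [hg, hne.symm]
  have hgo : ∀ x, x ≠ u → x ≠ v → g x = f x := by
    intro x h1 h2; simp [hg, h1, h2]
  have hgRDF : IsRDF G g := by
    constructor
    · intro x
      by_cases hx : x = u
      · simp [hg, hx]
      by_cases hy : x = v
      · rw [hy, hgv]; omega
      · rw [hgo x hx hy]; exact hf.1 x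
    · intro x hx
      by_cases hu' : x = u
      · rw [hu', hgu] at hx; omega
      by_cases hv' : x = v
      · exact ⟨u, hv' ▸ huv.symm, hgu⟩
      · rw [hgo x hu' hv'] at hx
        exact absurd hx (by have := hpos x; omega)
  have hvmem : v ∈ Finset.univ.erase u := Finset.mem_erase.2 ⟨hne.symm, Finset.mem_univ v⟩
  have key : ∀ h : V → ℕ,
      ∑ x, h x = h u + (h v + ∑ x ∈ (Finset.univ.erase u).erase v, h x) := by
    intro h
    rw [← Finset.add_sum_erase _ h (Finset.mem_univ u), ← Finset.add_sum_erase _ h hvmem]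
  have htail : ∑ x ∈ (Finset.univ.erase u).erase v, g x
      = ∑ x ∈ (Finset.univ.erase u).erase v, f x := by
    apply Finset.sum_congr rfl
    intro x hx
    rw [Finset.mem_erase, Finset.mem_erase] at hx
    exact hgo x hx.2.1 hx.1
  have hsum : rdfWeight g ≤ rdfWeight f := by
    unfold rdfWeight
    rw [key g, key f, htail, hgu, hgv]
    have := hpos u; have := hpos v
    omega
  refine ⟨g, hgRDF, le_antisymm ?_ ?_, u, hgu⟩
  · exact le_trans hsum (le_of_eq hfw)
  · exact roman_le G hgRDF

section disj
variable {α β : Type*} {G₁ : SimpleGraph α} {G₂ : SimpleGraph β}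

lemma disjUnion_adj_inl {u v : α} :
    (disjUnion G₁ G₂).Adj (Sum.inl u) (Sum.inl v) ↔ G₁.Adj u v := Iff.rfl

lemma disjUnion_adj_inr {u v : β} :
    (disjUnion G₁ G₂).Adj (Sum.inr u) (Sum.inr v) ↔ G₂.Adj u v := Iff.rfl

lemma disjUnion_not_adj_inl_inr {u : α} {v : β} :
    ¬ (disjUnion G₁ G₂).Adj (Sum.inl u) (Sum.inr v) := fun h => h

lemma disjUnion_not_adj_inr_inl {u : β} {v : α} :
    ¬ (disjUnion G₁ G₂).Adj (Sum.inr u) (Sum.inl v) := fun h => h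

lemma isRDF_sumElim {f₁ : α → ℕ} {f₂ : β → ℕ}
    (h1 : IsRDF G₁ f₁) (h2 : IsRDF G₂ f₂) :
    IsRDF (disjUnion G₁ G₂) (Sum.elim f₁ f₂) := by
  constructor
  · rintro (v | v)
    · exact h1.1 v
    · exact h2.1 v
  · rintro (v | v) hv
    · obtain ⟨w, hw, hw2⟩ := h1.2 v hv
      exact ⟨Sum.inl w, hw, hw2⟩
    · obtain ⟨w, hw, hw2⟩ := h2.2 v hv
      exact ⟨Sum.inr w, hw, hw2⟩

lemma isRDF_restrict_left {f : α ⊕ β → ℕ} (h : IsRDF (disjUnion G₁ G₂) f) :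
    IsRDF G₁ (f ∘ Sum.inl) := by
  constructor
  · intro v; exact h.1 _
  · intro v hv
    obtain ⟨w, hw, hw2⟩ := h.2 (Sum.inl v) hv
    cases w with
    | inl w => exact ⟨w, hw, hw2⟩
    | inr w => exact absurd hw disjUnion_not_adj_inl_inr

lemma isRDF_restrict_right {f : α ⊕ β → ℕ} (h : IsRDF (disjUnion G₁ G₂) f) :
    IsRDF G₂ (f ∘ Sum.inr) := by
  constructor
  · intro v; exact h.1 _
  · intro v hv
    obtain ⟨w, hw, hw2⟩ := h.2 (Sum.inr v) hv
    cases w with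
    | inl w => exact absurd hw disjUnion_not_adj_inr_inl
    | inr w => exact ⟨w, hw, hw2⟩

lemma weight_sum [Fintype α] [Fintype β] (f : α ⊕ β → ℕ) :
    rdfWeight f = rdfWeight (f ∘ Sum.inl) + rdfWeight (f ∘ Sum.inr) := by
  unfold rdfWeight
  exact Fintype.sum_sum_type f

end disj

/-- if `G₁`, `G₂` are cographs each having a connected component with at
least two vertices, and `G` is their disjoint union, then
`γ_gR(G) = γ_R(G) = γ_R(G₁) + γ_R(G₂)`, and `γ_R(Gᶜ) = γ_R(G₁ᶜ ∨ G₂ᶜ)`. -/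
theorem cograph_disjUnion_romanNumbers {α β : Type*} [Fintype α] [Fintype β]
    (G₁ : SimpleGraph α) (G₂ : SimpleGraph β)
    (h₁ : IsCograph G₁) (h₂ : IsCograph G₂)
    (hc₁ : ∃ u v : α, u ≠ v ∧ G₁.Reachable u v)
    (hc₂ : ∃ u v : β, u ≠ v ∧ G₂.Reachable u v) :
    globalRomanNumber (disjUnion G₁ G₂) = romanNumber (disjUnion G₁ G₂) ∧
    romanNumber (disjUnion G₁ G₂) = romanNumber G₁ + romanNumber G₂ ∧
    romanNumber ((disjUnion G₁ G₂)ᶜ) = romanNumber (join (G₁ᶜ) (G₂ᶜ)) := by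
  classical
  obtain ⟨f₁, hf₁, hw₁, a, ha⟩ := exists_min_rdf_two G₁ (exists_edge G₁ hc₁)
  obtain ⟨f₂, hf₂, hw₂, b, hb⟩ := exists_min_rdf_two G₂ (exists_edge G₂ hc₂)
  -- additivity
  have hadd : romanNumber (disjUnion G₁ G₂) = romanNumber G₁ + romanNumber G₂ := by
    apply le_antisymm
    · calc romanNumber (disjUnion G₁ G₂) ≤ rdfWeight (Sum.elim f₁ f₂) :=
            roman_le _ (isRDF_sumElim hf₁ hf₂)
        _ = rdfWeight f₁ + rdfWeight f₂ := weight_sum _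
        _ = romanNumber G₁ + romanNumber G₂ := by rw [hw₁, hw₂]
    · obtain ⟨f, hf, hfw⟩ := exists_min_rdf (disjUnion G₁ G₂)
      calc romanNumber G₁ + romanNumber G₂
          ≤ rdfWeight (f ∘ Sum.inl) + rdfWeight (f ∘ Sum.inr) :=
            add_le_add (roman_le _ (isRDF_restrict_left hf))
              (roman_le _ (isRDF_restrict_right hf))
        _ = rdfWeight f := (weight_sum f).symm
        _ = romanNumber (disjUnion G₁ G₂) := hfw
  -- the combined function is a GRDF
  have hgrdf : IsGRDF (disjUnion G₁ G₂) (Sum.elim f₁ f₂) := by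
    refine ⟨isRDF_sumElim hf₁ hf₂, ?_, ?_⟩
    · rintro (v | v)
      · exact hf₁.1 v
      · exact hf₂.1 v
    · rintro (v | v) hv
      · refine ⟨Sum.inr b, ?_, hb⟩
        rw [SimpleGraph.compl_adj]
        exact ⟨by simp, disjUnion_not_adj_inl_inr⟩
      · refine ⟨Sum.inl a, ?_, ha⟩
        rw [SimpleGraph.compl_adj]
        exact ⟨by simp, disjUnion_not_adj_inr_inl⟩
  have hglob : globalRomanNumber (disjUnion G₁ G₂) = romanNumber (disjUnion G₁ G₂) := by
    apply le_antisymm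
    · calc globalRomanNumber (disjUnion G₁ G₂) ≤ rdfWeight (Sum.elim f₁ f₂) :=
            global_le _ hgrdf
        _ = romanNumber G₁ + romanNumber G₂ := by
            rw [weight_sum]
            simp only [Sum.elim_comp_inl, Sum.elim_comp_inr]
            rw [hw₁, hw₂]
        _ = romanNumber (disjUnion G₁ G₂) := hadd.symm
    · obtain ⟨g, hg, hgw⟩ := exists_min_grdf (disjUnion G₁ G₂)
      calc romanNumber (disjUnion G₁ G₂) ≤ rdfWeight g := roman_le _ hg.1
        _ = globalRomanNumber (disjUnion G₁ G₂) := hgw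
  have hEq : (disjUnion G₁ G₂)ᶜ = join (G₁ᶜ) (G₂ᶜ) := by
    ext x y
    cases x <;> cases y <;>
      simp [disjUnion, join, SimpleGraph.compl_adj]
  exact ⟨hglob, hadd, by rw [hEq]⟩
end
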